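/- The coefficient of z^n in F(z) = (1-z)^2 (1-z^s)^2 z^{ks} (1-2z)^{-2} satisfies [z^n]F(z) ~ (n/4)(1 - 2^{-s})^2 2^{n - ks} as n → ∞. -/

import Mathlib

open PowerSeries Filter Finset

noncomputable def Gp : PowerSeries ℝ := PowerSeries.mk (fun n => (2:ℝ)^n)

theorem one_sub_two_X_mul : (1 - 2 * X) * Gp = 1 := by
  have h2 : (2:ℝ⟦X⟧) * X * Gp = PowerSeries.C (R := ℝ) 2 * (X * Gp) := by
    rw [mul_assoc, (by rw [map_ofNat] : PowerSeries.C (R := ℝ) 2 = (2:ℝ⟦X⟧)).symm]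
  ext n
  rw [sub_mul, one_mul, map_sub, h2, PowerSeries.coeff_C_mul]
  cases n with
  | zero => simp [Gp]
  | succ m =>
    rw [PowerSeries.coeff_succ_X_mul]
    simp [Gp, pow_succ, PowerSeries.coeff_one]
    ring

theorem inv_sq : ((1 - 2 * X : ℝ⟦X⟧) ^ 2)⁻¹ = Gp ^ 2 := by
  rw [PowerSeries.inv_eq_iff_mul_eq_one]
  · rw [← mul_pow, mul_comm, one_sub_two_X_mul, one_pow]
  · simp

theorem coeff_Gp_sq (n : ℕ) : PowerSeries.coeff (R := ℝ) n (Gp ^ 2) = (n + 1) * 2 ^ n := by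
  rw [sq, PowerSeries.coeff_mul, Finset.Nat.sum_antidiagonal_eq_sum_range_succ_mk]
  have : ∀ j ∈ Finset.range (n + 1),
      PowerSeries.coeff j Gp * PowerSeries.coeff (n - j) Gp = 2 ^ n := by
    intro j hj
    rw [Finset.mem_range, Nat.lt_succ_iff] at hj
    simp only [Gp, PowerSeries.coeff_mk]
    rw [← pow_add, Nat.add_sub_cancel' hj]
  rw [Finset.sum_congr rfl this, Finset.sum_const, Finset.card_range, nsmul_eq_mul]
  push_cast; ring

theorem key (s k n : ℕ) (hn : 2 + 2*s + k*s ≤ n) :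
    PowerSeries.coeff (R := ℝ) n
        ((1 - X) ^ 2 * (1 - X ^ s) ^ 2 * X ^ (k * s) * ((1 - 2 * X) ^ 2)⁻¹)
      = 2 ^ n *
        (Polynomial.eval 2⁻¹
            ((1 - Polynomial.X) ^ 2 * (1 - Polynomial.X ^ s) ^ 2 * Polynomial.X ^ (k * s) : Polynomial ℝ) * n
          + ∑ j ∈ Finset.range (2 + 2*s + k*s + 1),
              ((1 - Polynomial.X) ^ 2 * (1 - Polynomial.X ^ s) ^ 2 * Polynomial.X ^ (k * s) : Polynomial ℝ).coeff j
                * (1 - j) * 2⁻¹ ^ j) := by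
  set d := 2 + 2*s + k*s with hd
  set p : Polynomial ℝ := (1 - Polynomial.X) ^ 2 * (1 - Polynomial.X ^ s) ^ 2 * Polynomial.X ^ (k * s) with hp
  have h1 : (1 - Polynomial.X : Polynomial ℝ).natDegree ≤ 1 :=
    (Polynomial.natDegree_sub_le _ _).trans (by simp)
  have h2 : (1 - Polynomial.X ^ s : Polynomial ℝ).natDegree ≤ s :=
    (Polynomial.natDegree_sub_le _ _).trans (by simp)
  have hdeg : p.natDegree ≤ d := by
    refine Polynomial.natDegree_mul_le.trans ?_
    refine add_le_add (Polynomial.natDegree_mul_le.trans (add_le_add ?_ ?_))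
      (Polynomial.natDegree_X_pow _).le
    · rw [Polynomial.natDegree_pow]; omega
    · rw [Polynomial.natDegree_pow]; omega
  have hcoe : (↑p : ℝ⟦X⟧) = (1 - X) ^ 2 * (1 - X ^ s) ^ 2 * X ^ (k * s) := by
    rw [hp]
    simp [Polynomial.coe_mul, Polynomial.coe_pow, Polynomial.coe_sub, Polynomial.coe_one,
      Polynomial.coe_X]
  rw [← hcoe, inv_sq, PowerSeries.coeff_mul, Finset.Nat.sum_antidiagonal_eq_sum_range_succ_mk]
  simp only [Polynomial.coeff_coe, coeff_Gp_sq]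
  rw [← Finset.sum_subset (Finset.range_subset_range.mpr (by omega : d + 1 ≤ n + 1))
    (fun j _ hj => by
      rw [Polynomial.coeff_eq_zero_of_natDegree_lt
        (hdeg.trans_lt (by simpa using Finset.mem_range.not.mp hj)), zero_mul])]
  rw [Polynomial.eval_eq_sum_range' (Nat.lt_succ_of_le hdeg) (2⁻¹ : ℝ), Finset.sum_mul,
    mul_add, Finset.mul_sum, Finset.mul_sum, ← Finset.sum_add_distrib]
  refine Finset.sum_congr rfl fun j hj => ?_
  rw [Finset.mem_range, Nat.lt_succ_iff] at hj
  have hjn : j ≤ n := hj.trans hn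
  rw [Nat.cast_sub hjn, pow_sub₀ (2:ℝ) two_ne_zero hjn, ← inv_pow]
  ring

set_option maxHeartbeats 1000000 in
open PowerSeries Filter in
/-- The `n`-th coefficient of `F(z) = (1-z)^2 (1-z^s)^2 z^{ks} (1-2z)^{-2}`
satisfies `[z^n] F(z) ~ (n/4) (1 - 2^{-s})^2 2^{n - ks}` as `n → ∞`. -/
theorem coeff_asymptotics (s k : ℕ) (hs : 0 < s) (hk : 0 < k) :
    Tendsto
      (fun n : ℕ =>
        (PowerSeries.coeff (R := ℝ) n
            ((1 - X) ^ 2 * (1 - X ^ s) ^ 2 * X ^ (k * s) * ((1 - 2 * X) ^ 2)⁻¹)) /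
          ((n / 4 : ℝ) * (1 - 2 ^ (-(s : ℤ))) ^ 2 * (2 ^ n / 2 ^ (k * s))))
      atTop (nhds 1) := by
  set d := 2 + 2*s + k*s with hd
  set p : Polynomial ℝ :=
    (1 - Polynomial.X) ^ 2 * (1 - Polynomial.X ^ s) ^ 2 * Polynomial.X ^ (k * s) with hp
  set A : ℝ := p.eval 2⁻¹ with hA
  set B : ℝ := ∑ j ∈ Finset.range (d + 1), p.coeff j * (1 - j) * 2⁻¹ ^ j with hB
  have hAval : A = (1 - 2⁻¹ : ℝ) ^ 2 * (1 - 2⁻¹ ^ s) ^ 2 * 2⁻¹ ^ (k * s) := by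
    simp [hA, hp]
  have hlt : (2⁻¹ : ℝ) ^ s < 1 := pow_lt_one₀ (by norm_num) (by norm_num) hs.ne'
  have hApos : 0 < A := by
    rw [hAval]
    have : (0:ℝ) < 1 - 2⁻¹ ^ s := by linarith
    positivity
  have hzpow : ((2:ℝ) ^ (-(s:ℤ))) = 2⁻¹ ^ s := by
    rw [zpow_neg, zpow_natCast, inv_pow]
  have hden : ∀ n : ℕ,
      ((n / 4 : ℝ) * (1 - 2 ^ (-(s : ℤ))) ^ 2 * (2 ^ n / 2 ^ (k * s))) = A * n * 2 ^ n := by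
    intro n
    rw [hzpow, hAval]
    have h4 : ((1:ℝ) - 2⁻¹) ^ 2 = 4⁻¹ := by norm_num
    rw [h4, inv_pow]
    field_simp
    have h5 : ((1:ℝ)/2) ^ (s*k) * 2 ^ (s*k) = 1 := by rw [← mul_pow]; norm_num
    linear_combination (-((n:ℝ) - n * 2 ^ s * 2 + n * 2 ^ (s * 2))) * h5
  have hmain : Tendsto (fun n : ℕ => 1 + (B / A) / n) atTop (nhds 1) := by
    simpa using tendsto_const_nhds.add (tendsto_const_div_atTop_nhds_zero_nat (B / A))
  refine hmain.congr' ?_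
  filter_upwards [eventually_ge_atTop d] with n hn
  have hn0 : (0:ℝ) < n := by
    have : 0 < n := by omega
    exact_mod_cast this
  rw [key s k n hn, hden n]
  have h2n : (2:ℝ) ^ n ≠ 0 := by positivity
  have hA0 : A ≠ 0 := hApos.ne'
  have hn0' : (n:ℝ) ≠ 0 := hn0.ne'
  rw [div_div, mul_comm (A * (n:ℝ)) ((2:ℝ)^n), mul_div_mul_left _ _ h2n,
    add_div, div_self (mul_ne_zero hA0 hn0')]
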